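/- Let λ > 0, n ∈ ℕ with n ≥ 1, ε > 0, γ ∈ (0,1), and Δ ≥ log(1/γ)/(λn). Let w = (w_1,…,w_{n+1}) be drawn from the (n+1)-fold product of the exponential distribution with rate λ, set D = (w_1,…,w_n), D' = (w_1,…,w_{n−1},w_{n+1}), and let f(D) = (1/n)·Σ_{i=1}^n D_i be the sample mean. For c ∈ ℝ let Lap(c, Δ/ε) denote the Laplace measure on ℝ with location c and scale Δ/ε. Then the probability over w that for every measurable S ⊆ ℝ, Lap(f(D), Δ/ε)(S) ≤ e^ε · Lap(f(D'), Δ/ε)(S), is at least 1 − γ. -/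

import Mathlib

open MeasureTheory ProbabilityTheory Real
open scoped ENNReal BigOperators

/-- The one-dimensional Laplace measure with location `a` and scale `b`:
density `(1/(2b))·exp(−|x − a|/b)` with respect to Lebesgue measure. -/
noncomputable def laplaceMeasure (a b : ℝ) : Measure ℝ :=
  volume.withDensity fun x => ENNReal.ofReal ((2 * b)⁻¹ * Real.exp (-(|x - a| / b)))

open Set

lemma expMeasure_eq (r : ℝ) : expMeasure r = volume.withDensity (exponentialPDF r) := rfl

lemma dp_core (c c' bb ε : ℝ) (hbb : 0 < bb) (hcc : |c - c'| ≤ ε * bb)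
    (S : Set ℝ) (hS : MeasurableSet S) :
    laplaceMeasure c bb S ≤ ENNReal.ofReal (Real.exp ε) * laplaceMeasure c' bb S := by
  rw [laplaceMeasure, laplaceMeasure, withDensity_apply _ hS, withDensity_apply _ hS,
    ← lintegral_const_mul' _ _ ENNReal.ofReal_ne_top]
  apply lintegral_mono
  intro x
  show ENNReal.ofReal _ ≤ ENNReal.ofReal (Real.exp ε) * ENNReal.ofReal _
  rw [← ENNReal.ofReal_mul (exp_pos ε).le]
  apply ENNReal.ofReal_le_ofReal
  rw [show Real.exp ε * ((2*bb)⁻¹ * Real.exp (-(|x - c'|/bb)))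
      = (2*bb)⁻¹ * (Real.exp ε * Real.exp (-(|x-c'|/bb))) by ring, ← Real.exp_add]
  have hkey : |x - c'| - |x - c| ≤ ε * bb := by
    have h1 := abs_sub_abs_le_abs_sub (x - c') (x - c)
    have h2 : (x - c') - (x - c) = c - c' := by ring
    rw [h2] at h1
    linarith
  have h3 : (|x - c'| - |x - c|) / bb ≤ ε := by
    rw [div_le_iff₀ hbb]; linarith
  have h4 : -(|x - c| / bb) ≤ ε + -(|x - c'| / bb) := by
    rw [sub_div] at h3; linarith
  exact mul_le_mul_of_nonneg_left (Real.exp_le_exp.2 h4) (by positivity)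

lemma expMeasure_Ioi {lam : ℝ} (hlam : 0 < lam) {c : ℝ} (hc : 0 ≤ c) :
    expMeasure lam (Set.Ioi c) = ENNReal.ofReal (Real.exp (-(lam * c))) := by
  haveI := isProbabilityMeasure_expMeasure hlam
  have h1 : expMeasure lam (Set.Iic c) = ENNReal.ofReal (1 - Real.exp (-(lam * c))) := by
    rw [expMeasure_eq, withDensity_apply _ measurableSet_Iic,
      lintegral_exponentialPDF_eq_antiDeriv hlam, if_pos hc]
  have h2 := measure_compl (μ := expMeasure lam) (measurableSet_Iic (a := c)) (measure_ne_top _ _)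
  rw [compl_Iic, measure_univ, h1] at h2
  have he : Real.exp (-(lam * c)) ≤ 1 := Real.exp_le_one_iff.2 (by nlinarith)
  rw [h2, ← ENNReal.ofReal_one, ← ENNReal.ofReal_sub 1 (by linarith)]
  norm_num

lemma ae_nonneg_expMeasure {lam : ℝ} : ∀ᵐ x ∂(expMeasure lam), 0 ≤ x := by
  rw [ae_iff]
  have h : {x : ℝ | ¬ 0 ≤ x} = Set.Iio 0 := by ext x; simp only [Set.mem_setOf_eq, Set.mem_Iio, not_le]
  rw [h, expMeasure_eq, withDensity_apply _ measurableSet_Iio]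
  exact lintegral_exponentialPDF_of_nonpos le_rfl

lemma lintegral_tail {lam t : ℝ} (hlam : 0 < lam) (ht : 0 ≤ t) :
    ∫⁻ x, expMeasure lam (Set.Ioi (x + t)) ∂(expMeasure lam)
      ≤ ENNReal.ofReal (Real.exp (-(lam * t)) / 2) := by
  have hpdf : Measurable (exponentialPDF lam) := (measurable_exponentialPDFReal lam).ennreal_ofReal
  have step1 : ∫⁻ x, expMeasure lam (Set.Ioi (x + t)) ∂(expMeasure lam)
      ≤ ∫⁻ x, ENNReal.ofReal (Real.exp (-(lam * (x + t)))) ∂(expMeasure lam) := by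
    apply lintegral_mono_ae
    filter_upwards [ae_nonneg_expMeasure (lam := lam)] with x hx
    rw [expMeasure_Ioi hlam (by linarith)]
  refine step1.trans ?_
  rw [expMeasure_eq, lintegral_withDensity_eq_lintegral_mul _ hpdf
    (by fun_prop)]
  have hpt : ∀ x : ℝ, exponentialPDF lam x * ENNReal.ofReal (Real.exp (-(lam * (x + t))))
      = ENNReal.ofReal (Real.exp (-(lam * t)) / 2) * exponentialPDF (2 * lam) x := by
    intro x
    by_cases hx : 0 ≤ x
    · rw [exponentialPDF_of_nonneg hx, exponentialPDF_of_nonneg hx,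
        ← ENNReal.ofReal_mul (by positivity), ← ENNReal.ofReal_mul (by positivity)]
      congr 1
      rw [show -(lam * (x + t)) = -(lam * x) + -(lam * t) by ring, Real.exp_add,
        show -(2 * lam * x) = -(lam * x) + -(lam * x) by ring, Real.exp_add]
      ring
    · rw [exponentialPDF_of_neg (lt_of_not_ge hx), exponentialPDF_of_neg (lt_of_not_ge hx),
        zero_mul, mul_zero]
  calc ∫⁻ x, (exponentialPDF lam * fun x => ENNReal.ofReal (Real.exp (-(lam * (x + t))))) x
        = ∫⁻ x, ENNReal.ofReal (Real.exp (-(lam * t)) / 2) * exponentialPDF (2 * lam) x := by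
          apply lintegral_congr; intro x; exact hpt x
    _ = ENNReal.ofReal (Real.exp (-(lam * t)) / 2) * ∫⁻ x, exponentialPDF (2 * lam) x :=
          lintegral_const_mul' _ _ ENNReal.ofReal_ne_top
    _ ≤ ENNReal.ofReal (Real.exp (-(lam * t)) / 2) := by
          rw [lintegral_exponentialPDF_eq_one (by positivity), mul_one]

lemma map_pair {lam : ℝ} (hlam : 0 < lam) {m : ℕ} (a b : Fin m) (hab : a ≠ b) :
    Measure.map (fun w : Fin m → ℝ => (w a, w b)) (Measure.pi fun _ => expMeasure lam)
      = (expMeasure lam).prod (expMeasure lam) := by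
  haveI := isProbabilityMeasure_expMeasure hlam
  classical
  haveI : SigmaFinite (expMeasure lam) := inferInstance
  refine (Measure.prod_eq (μ := expMeasure lam) (ν := expMeasure lam) fun s t hs ht => ?_).symm
  rw [Measure.map_apply (by fun_prop) (hs.prod ht)]
  have hpre : (fun w : Fin m → ℝ => (w a, w b)) ⁻¹' (s ×ˢ t)
      = Set.pi Set.univ (fun j => if j = a then s else if j = b then t else Set.univ) := by
    ext w
    simp only [Set.mem_preimage, Set.mem_prod, Set.mem_pi, Set.mem_univ, true_implies]
    constructor
    · rintro ⟨h1, h2⟩ j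
      split_ifs with hja hjb
      · exact hja ▸ h1
      · exact hjb ▸ h2
      · trivial
    · intro h
      refine ⟨?_, ?_⟩
      · have := h a; rwa [if_pos rfl] at this
      · have := h b; rwa [if_neg (fun hc => hab hc.symm), if_pos rfl] at this
  rw [hpre, Measure.pi_pi]
  rw [← Finset.mul_prod_erase Finset.univ _ (Finset.mem_univ a)]
  congr 1
  · rw [if_pos rfl]
  · rw [Finset.prod_eq_single_of_mem b
      (Finset.mem_erase.2 ⟨Ne.symm hab, Finset.mem_univ b⟩)]
    · rw [if_neg (fun hc => hab hc.symm), if_pos rfl]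
    · intro j hj hjb
      rw [if_neg (Finset.mem_erase.1 hj).1, if_neg hjb, measure_univ]

/-- The Laplace mechanism applied to the sample mean of exponentially
distributed data is `(ε,γ)`-randomly differentially private: for `Δ ≥ log(1/γ)/(λn)`, with
probability at least `1 − γ` over `w ~ Exp(λ)^{⊗(n+1)}`, the `ε`-DP inequality holds between
the Laplace mechanism's outputs on the induced neighbouring pair. -/
theorem laplace_sampleMean_rdp
    (lam : ℝ) (hlam : 0 < lam) (n : ℕ) (hn : 1 ≤ n)
    (ε γ Δ : ℝ) (hε : 0 < ε) (hγ0 : 0 < γ) (hγ1 : γ < 1)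
    (hΔ : Real.log (1/γ) / (lam * n) ≤ Δ)
    (A : Set (Fin (n + 1) → ℝ))
    (hAdef : A = {w : Fin (n + 1) → ℝ |
      ∀ S : Set ℝ, MeasurableSet S →
        laplaceMeasure ((1 / (n : ℝ)) * ∑ i : Fin n, w i.castSucc) (Δ / ε) S ≤
          ENNReal.ofReal (Real.exp ε) *
            laplaceMeasure
              ((1 / (n : ℝ)) * ∑ i : Fin n,
                if (i : ℕ) = n - 1 then w (Fin.last n) else w i.castSucc) (Δ / ε) S}) :
    1 - γ ≤ ((Measure.pi fun _ : Fin (n + 1) => expMeasure lam) A).toReal := by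
  classical
  have hn0 : (0:ℝ) < n := by exact_mod_cast Nat.pos_of_ne_zero (by omega)
  have hloggpos : 0 < Real.log (1/γ) := Real.log_pos ((one_lt_div hγ0).2 hγ1)
  have hΔpos : 0 < Δ := lt_of_lt_of_le (div_pos hloggpos (mul_pos hlam hn0)) hΔ
  set t : ℝ := (n:ℝ) * Δ with ht
  have htpos : 0 < t := mul_pos hn0 hΔpos
  have hexpγ : Real.exp (-(lam * t)) ≤ γ := by
    rw [← Real.exp_log hγ0]
    apply Real.exp_le_exp.2
    have h1 : Real.log (1/γ) ≤ Δ * (lam * n) := (div_le_iff₀ (mul_pos hlam hn0)).1 hΔ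
    rw [one_div, Real.log_inv] at h1
    have : lam * t = Δ * (lam * n) := by rw [ht]; ring
    linarith [this ▸ h1]
  haveI : IsProbabilityMeasure (expMeasure lam) := isProbabilityMeasure_expMeasure hlam
  set μ : Measure (Fin (n+1) → ℝ) := Measure.pi fun _ => expMeasure lam with hμ
  haveI : IsProbabilityMeasure μ := by rw [hμ]; infer_instance
  set k : Fin n := ⟨n - 1, by omega⟩ with hk
  set a : Fin (n+1) := k.castSucc with ha
  set b : Fin (n+1) := Fin.last n with hb
  have hab : a ≠ b := by
    apply Fin.ne_of_val_ne
    simp only [ha, hb, hk, Fin.coe_castSucc, Fin.val_last]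
    omega
  set B : Set (Fin (n+1) → ℝ) := {w | |w a - w b| ≤ t} with hB
  have hBmeas : MeasurableSet B :=
    measurableSet_le (((measurable_pi_apply a).sub (measurable_pi_apply b)).abs) measurable_const
  -- B ⊆ A
  have hBA : B ⊆ A := by
    intro w hw
    rw [hAdef]
    intro S hS
    have hdiff : (1 / (n : ℝ)) * ∑ i : Fin n, w i.castSucc
        - (1 / (n : ℝ)) * ∑ i : Fin n,
            (if (i : ℕ) = n - 1 then w (Fin.last n) else w i.castSucc)
        = (1 / (n : ℝ)) * (w a - w b) := by
      rw [← mul_sub, ← Finset.sum_sub_distrib]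
      congr 1
      calc ∑ i : Fin n, (w i.castSucc - if (i : ℕ) = n - 1 then w (Fin.last n) else w i.castSucc)
          = ∑ i : Fin n, (if i = k then w a - w b else 0) := by
            apply Finset.sum_congr rfl
            intro i _
            by_cases h : i = k
            · subst h
              rw [if_pos rfl, if_pos (by simp [hk])]
            · have h2 : ¬ ((i : ℕ) = n - 1) := fun hc => h (Fin.ext (by simp [hk, hc]))
              rw [if_neg h, if_neg h2, sub_self]
        _ = w a - w b := by rw [Finset.sum_ite_eq' Finset.univ k]; simp
    apply dp_core _ _ _ _ (div_pos hΔpos hε)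
    · rw [hdiff]
      have : ε * (Δ / ε) = Δ := by field_simp
      rw [this, abs_mul, abs_of_pos (by positivity : (0:ℝ) < 1 / (n:ℝ))]
      rw [hB] at hw
      have hw' : |w a - w b| ≤ t := hw
      calc 1 / (n:ℝ) * |w a - w b| ≤ 1 / (n:ℝ) * t :=
            mul_le_mul_of_nonneg_left hw' (by positivity)
        _ = Δ := by rw [ht]; field_simp
    · exact hS
  -- measure of Bᶜ
  have hbad : μ Bᶜ ≤ ENNReal.ofReal γ := by
    set T : (Fin (n+1) → ℝ) → ℝ × ℝ := fun w => (w a, w b) with hT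
    have hTm : Measurable T := (measurable_pi_apply a).prodMk (measurable_pi_apply b)
    set Bad1 : Set (ℝ × ℝ) := {p | p.2 + t < p.1} with hBad1
    set Bad2 : Set (ℝ × ℝ) := {p | p.1 + t < p.2} with hBad2
    have h1m : MeasurableSet Bad1 :=
      measurableSet_lt (measurable_snd.add measurable_const) measurable_fst
    have h2m : MeasurableSet Bad2 :=
      measurableSet_lt (measurable_fst.add measurable_const) measurable_snd
    have hsub : Bᶜ ⊆ T ⁻¹' Bad1 ∪ T ⁻¹' Bad2 := by
      intro w hw
      simp only [hB, Set.mem_compl_iff, Set.mem_setOf_eq, not_le] at hw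
      rcases abs_cases (w a - w b) with ⟨he, _⟩ | ⟨he, _⟩
      · left; simp only [Set.mem_preimage, hT, hBad1, Set.mem_setOf_eq]; linarith [he ▸ hw]
      · right; simp only [Set.mem_preimage, hT, hBad2, Set.mem_setOf_eq]; linarith [he ▸ hw]
    have hmap := map_pair hlam a b hab
    have e1 : μ (T ⁻¹' Bad1) = ((expMeasure lam).prod (expMeasure lam)) Bad1 := by
      rw [← hmap, Measure.map_apply hTm h1m]
    have e2 : μ (T ⁻¹' Bad2) = ((expMeasure lam).prod (expMeasure lam)) Bad2 := by
      rw [← hmap, Measure.map_apply hTm h2m]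
    have p1 : ((expMeasure lam).prod (expMeasure lam)) Bad1
        = ∫⁻ y, expMeasure lam (Set.Ioi (y + t)) ∂(expMeasure lam) := by
      rw [Measure.prod_apply_symm h1m]
      have hset1 : ∀ y : ℝ, (fun x => (x, y)) ⁻¹' Bad1 = Set.Ioi (y + t) :=
        fun y => Set.ext fun x => by simp [hBad1]
      simp_rw [hset1]
    have p2 : ((expMeasure lam).prod (expMeasure lam)) Bad2
        = ∫⁻ x, expMeasure lam (Set.Ioi (x + t)) ∂(expMeasure lam) := by
      rw [Measure.prod_apply h2m]
      have hset2 : ∀ x : ℝ, Prod.mk x ⁻¹' Bad2 = Set.Ioi (x + t) :=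
        fun x => Set.ext fun y => by simp [hBad2]
      simp_rw [hset2]
    have htail := lintegral_tail hlam htpos.le (lam := lam)
    calc μ Bᶜ ≤ μ (T ⁻¹' Bad1 ∪ T ⁻¹' Bad2) := measure_mono hsub
      _ ≤ μ (T ⁻¹' Bad1) + μ (T ⁻¹' Bad2) := measure_union_le _ _
      _ ≤ ENNReal.ofReal (Real.exp (-(lam * t)) / 2)
          + ENNReal.ofReal (Real.exp (-(lam * t)) / 2) := by
            rw [e1, e2, p1, p2]; exact add_le_add htail htail
      _ = ENNReal.ofReal (Real.exp (-(lam * t))) := by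
            rw [← ENNReal.ofReal_add (by positivity) (by positivity)]; ring_nf
      _ ≤ ENNReal.ofReal γ := ENNReal.ofReal_le_ofReal hexpγ
  -- conclude
  have h1 : μ B ≤ μ A := measure_mono hBA
  have h2 : μ B + μ Bᶜ = 1 := by rw [measure_add_measure_compl hBmeas, measure_univ]
  have h3 : (μ B).toReal + (μ Bᶜ).toReal = 1 := by
    rw [← ENNReal.toReal_add (measure_ne_top _ _) (measure_ne_top _ _), h2, ENNReal.toReal_one]
  have h4 : (μ Bᶜ).toReal ≤ γ := ENNReal.toReal_le_of_le_ofReal hγ0.le hbad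
  have h5 : (μ B).toReal ≤ (μ A).toReal := ENNReal.toReal_mono (measure_ne_top _ _) h1
  linarith
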